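/- Generalized Kantorovich-Rubinstein duality fails for the 2-Wasserstein lifting: let X = {0,1} with discrete metric d(0,1) = 1, μ = (2/3)·δ_0 + (1/3)·δ_1, ν = (1/3)·δ_0 + (2/3)·δ_1, and λ₂(f)(ρ) = (Σ_x ρ(x) f(x)²)^{1/2}. Then sup { |λ₂(f)(ν) − λ₂(f)(μ)| : f: X → [0,1] nonexpansive } ≤ 1/3, while inf { (Σ_{(x,y)} c(x,y) d(x,y)²)^{1/2} : c a coupling of μ and ν } = 1/√3. -/
import Mathlib


/-- Discrete metric on `Fin 2`. -/
noncomputable def dDisc (x y : Fin 2) : ℝ := if x = y then 0 else 1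

/-- The 2-Wasserstein modality: square root of the expectation of the square. -/
noncomputable def lam2 (f : Fin 2 → ℝ) (ρ : Fin 2 → ℝ) : ℝ :=
  Real.sqrt (∑ x, ρ x * f x ^ 2)

theorem p_wasserstein_duality_fails :
    (sSup {v : ℝ | ∃ f : Fin 2 → ℝ, (∀ x, f x ∈ Set.Icc (0:ℝ) 1) ∧
        (∀ x y, |f x - f y| ≤ dDisc x y) ∧
        v = |lam2 f ![1/3, 2/3] - lam2 f ![2/3, 1/3]|} ≤ 1/3) ∧
    (sInf {v : ℝ | ∃ c : Fin 2 × Fin 2 → ℝ, (∀ p, 0 ≤ c p) ∧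
        (∀ x, ∑ y, c (x, y) = ![(2:ℝ)/3, 1/3] x) ∧
        (∀ y, ∑ x, c (x, y) = ![(1:ℝ)/3, 2/3] y) ∧
        v = Real.sqrt (∑ p : Fin 2 × Fin 2, c p * (dDisc p.1 p.2) ^ 2)} =
      1 / Real.sqrt 3) := by
  constructor
  · apply Real.sSup_le _ (by norm_num)
    rintro v ⟨f, hf, hlip, rfl⟩
    obtain ⟨ha0, ha1⟩ := hf 0
    obtain ⟨hb0, hb1⟩ := hf 1
    set a := f 0 with hA
    set b := f 1 with hB
    have h1 : lam2 f ![1/3, 2/3] = Real.sqrt (1/3 * a^2 + 2/3 * b^2) := by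
      simp [lam2, Fin.sum_univ_two, ← hA, ← hB]
    have h2 : lam2 f ![2/3, 1/3] = Real.sqrt (2/3 * a^2 + 1/3 * b^2) := by
      simp [lam2, Fin.sum_univ_two, ← hA, ← hB]
    rw [h1, h2]
    set s := Real.sqrt (1/3 * a^2 + 2/3 * b^2) with hsdef
    set t := Real.sqrt (2/3 * a^2 + 1/3 * b^2) with htdef
    have hs0 : 0 ≤ s := Real.sqrt_nonneg _
    have ht0 : 0 ≤ t := Real.sqrt_nonneg _
    have hs2 : s^2 = 1/3 * a^2 + 2/3 * b^2 := Real.sq_sqrt (by nlinarith)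
    have ht2 : t^2 = 2/3 * a^2 + 1/3 * b^2 := Real.sq_sqrt (by nlinarith)
    have hsb : b ≤ s + t := by nlinarith [sq_nonneg (s + t - b)]
    have hta : a ≤ s + t := by nlinarith [sq_nonneg (s + t - a)]
    rw [abs_le]
    constructor
    · nlinarith [mul_nonneg hs0 ht0, sq_nonneg (s - t), mul_nonneg (mul_nonneg hb0 hb0) (sub_nonneg.2 hb1)]
    · nlinarith [mul_nonneg hs0 ht0, sq_nonneg (s - t), mul_nonneg (mul_nonneg ha0 ha0) (sub_nonneg.2 ha1)]
  · have h3 : Real.sqrt (1/3 : ℝ) = 1 / Real.sqrt 3 := by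
      rw [show (1:ℝ)/3 = 3⁻¹ by norm_num, Real.sqrt_inv, one_div]
    have hwit : (1 / Real.sqrt 3) ∈ {v : ℝ | ∃ c : Fin 2 × Fin 2 → ℝ, (∀ p, 0 ≤ c p) ∧
        (∀ x, ∑ y, c (x, y) = ![(2:ℝ)/3, 1/3] x) ∧
        (∀ y, ∑ x, c (x, y) = ![(1:ℝ)/3, 2/3] y) ∧
        v = Real.sqrt (∑ p : Fin 2 × Fin 2, c p * (dDisc p.1 p.2) ^ 2)} := by
      refine ⟨fun p => ![![(1:ℝ)/3, 1/3], ![0, 1/3]] p.1 p.2, ?_, ?_, ?_, ?_⟩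
      · intro p
        obtain ⟨x, y⟩ := p
        fin_cases x <;> fin_cases y <;> norm_num
      · intro x
        fin_cases x <;> norm_num [Fin.sum_univ_two]
      · intro y
        fin_cases y <;> norm_num [Fin.sum_univ_two]
      · rw [← h3]
        rw [Fintype.sum_prod_type]
        simp [Fin.sum_univ_two, dDisc]
    apply le_antisymm
    · apply csInf_le ⟨0, ?_⟩ hwit
      rintro v ⟨c, hc0, _, _, rfl⟩
      exact Real.sqrt_nonneg _
    · apply le_csInf ⟨_, hwit⟩
      rintro v ⟨c, hc0, hrow, hcol, rfl⟩
      have e1 := hrow 0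
      have e2 := hrow 1
      have e3 := hcol 0
      have e4 := hcol 1
      simp [Fin.sum_univ_two] at e1 e2 e3 e4
      rw [← h3]
      apply Real.sqrt_le_sqrt
      rw [Fintype.sum_prod_type]
      simp only [Fin.sum_univ_two, dDisc]
      norm_num
      have := hc0 (1, 0)
      nlinarith [hc0 (0,0), hc0 (0,1), hc0 (1,0), hc0 (1,1)]
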